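/- Let a ∈ ℝ be nonzero, let J be a nonempty finite index set, and for each j ∈ J let w_j > 0 and Δx_j ∈ ℝ satisfy the upwind condition a · Δx_j < 0. Set S₁ = Σ_{j∈J} w_j Δx_j and S₂ = Σ_{j∈J} w_j Δx_j². Given values g_i ∈ ℝ and g_j ∈ ℝ (j ∈ J), define the first-order meshless upwind update g⁺ = g_i − Δt · a · (Σ_{j∈J} w_j Δx_j (g_j − g_i)) / S₂. If 0 ≤ Δt ≤ S₂ / |a · S₁|, then g⁺ satisfies the discrete maximum principle: min(g_i, min_{j∈J} g_j) ≤ g⁺ ≤ max(g_i, max_{j∈J} g_j). In particular the scheme is L^∞-stable under this generalized CFL condition. -/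
import Mathlib


open Finset

/-- The first-order meshless upwind scheme satisfies the discrete maximum principle
(hence is `L^∞`-stable) under the generalized CFL condition
`Δt ≤ S₂ / |a S₁|` with `S₁ = Σ w_j Δx_j` and `S₂ = Σ w_j Δx_j²`. -/
theorem meshless_upwind_dmp {ι : Type*} (a : ℝ) (ha : a ≠ 0)
    (J : Finset ι) (hJ : J.Nonempty) (w Δx g : ι → ℝ)
    (hw : ∀ j ∈ J, 0 < w j) (hup : ∀ j ∈ J, a * Δx j < 0)
    (gi Δt : ℝ) (hΔt0 : 0 ≤ Δt)
    (hΔt : Δt ≤ (∑ j ∈ J, w j * Δx j ^ 2) / |a * ∑ j ∈ J, w j * Δx j|) :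
    min gi (J.inf' hJ g) ≤
      gi - Δt * a * (∑ j ∈ J, w j * Δx j * (g j - gi)) / (∑ j ∈ J, w j * Δx j ^ 2) ∧
    gi - Δt * a * (∑ j ∈ J, w j * Δx j * (g j - gi)) / (∑ j ∈ J, w j * Δx j ^ 2) ≤
      max gi (J.sup' hJ g) := by
  set S2 : ℝ := ∑ j ∈ J, w j * Δx j ^ 2 with hS2def
  have hS2 : 0 < S2 := by
    apply Finset.sum_pos _ hJ
    intro j hj
    have hΔ : Δx j ≠ 0 := by
      intro h
      have := hup j hj
      rw [h, mul_zero] at this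
      exact lt_irrefl 0 this
    exact mul_pos (hw j hj) (by positivity)
  have haS1 : a * ∑ j ∈ J, w j * Δx j < 0 := by
    rw [Finset.mul_sum]
    apply Finset.sum_neg _ hJ
    intro j hj
    have := mul_neg_of_pos_of_neg (hw j hj) (hup j hj)
    nlinarith [hw j hj, hup j hj]
  have habs : |a * ∑ j ∈ J, w j * Δx j| = -(a * ∑ j ∈ J, w j * Δx j) :=
    abs_of_neg haS1
  -- the convex coefficients
  set d : ι → ℝ := fun j => -Δt * a * (w j * Δx j) / S2 with hddef
  have hd0 : ∀ j ∈ J, 0 ≤ d j := by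
    intro j hj
    have h1 : a * (w j * Δx j) ≤ 0 := by nlinarith [hw j hj, hup j hj]
    have : 0 ≤ -Δt * a * (w j * Δx j) := by nlinarith
    exact div_nonneg this hS2.le
  have hdsum : (∑ j ∈ J, d j) ≤ 1 := by
    have hsum : (∑ j ∈ J, d j) = -Δt * a * (∑ j ∈ J, w j * Δx j) / S2 := by
      rw [← Finset.sum_div, ← Finset.mul_sum]
    rw [hsum, div_le_one hS2]
    have habspos : 0 < |a * ∑ j ∈ J, w j * Δx j| := abs_pos.mpr (ne_of_lt haS1)
    rw [le_div_iff₀ habspos] at hΔt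
    rw [habs] at hΔt
    nlinarith
  -- rewrite the update as a convex combination
  have hrw : gi - Δt * a * (∑ j ∈ J, w j * Δx j * (g j - gi)) / S2
      = gi + ∑ j ∈ J, d j * (g j - gi) := by
    have : ∑ j ∈ J, d j * (g j - gi)
        = ∑ j ∈ J, (-Δt * a / S2) * (w j * Δx j * (g j - gi)) := by
      apply Finset.sum_congr rfl
      intro j hj
      rw [hddef]; ring
    rw [this, ← Finset.mul_sum]; ring
  rw [hrw]
  set m : ℝ := min gi (J.inf' hJ g) with hmdef
  set M : ℝ := max gi (J.sup' hJ g) with hMdef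
  have hmgi : m ≤ gi := min_le_left _ _
  have hMgi : gi ≤ M := le_max_left _ _
  have hmg : ∀ j ∈ J, m ≤ g j := fun j hj =>
    le_trans (min_le_right _ _) (Finset.inf'_le g hj)
  have hMg : ∀ j ∈ J, g j ≤ M := fun j hj =>
    le_trans (Finset.le_sup' g hj) (le_max_right _ _)
  have hsplit : ∀ x : ι → ℝ,
      gi + ∑ j ∈ J, d j * (x j - gi)
      = (1 - ∑ j ∈ J, d j) * gi + ∑ j ∈ J, d j * x j := by
    intro x
    simp only [mul_sub, Finset.sum_sub_distrib, ← Finset.sum_mul]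
    ring
  constructor
  · rw [hsplit]
    calc m = (1 - ∑ j ∈ J, d j) * m + ∑ j ∈ J, d j * m := by
            rw [← Finset.sum_mul]; ring
      _ ≤ (1 - ∑ j ∈ J, d j) * gi + ∑ j ∈ J, d j * g j := by
            apply add_le_add
            · exact mul_le_mul_of_nonneg_left hmgi (by linarith)
            · exact Finset.sum_le_sum fun j hj =>
                mul_le_mul_of_nonneg_left (hmg j hj) (hd0 j hj)
  · rw [hsplit]
    calc (1 - ∑ j ∈ J, d j) * gi + ∑ j ∈ J, d j * g j
        ≤ (1 - ∑ j ∈ J, d j) * M + ∑ j ∈ J, d j * M := by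
            apply add_le_add
            · exact mul_le_mul_of_nonneg_left hMgi (by linarith)
            · exact Finset.sum_le_sum fun j hj =>
                mul_le_mul_of_nonneg_left (hMg j hj) (hd0 j hj)
      _ = M := by rw [← Finset.sum_mul]; ring
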